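/- If a triangle-free graph on n vertices has exactly ⌊n²/4⌋ edges, then it is bipartite. -/

import Mathlib

open Finset SimpleGraph

lemma range_filter_even_card (n : ℕ) :
    #((Finset.range n).filter (fun x => x % 2 = 0)) = (n + 1) / 2 := by
  induction n with
  | zero => simp
  | succ k ih =>
    rw [Finset.range_add_one, Finset.filter_insert]
    split_ifs with hk
    · rw [Finset.card_insert_of_notMem (by simp)]
      omega
    · omega

lemma fin_filter_even_card (n : ℕ) :
    #((Finset.univ.filter (fun v : Fin n => (v : ℕ) % 2 = 0))) = (n + 1) / 2 := by
  rw [Finset.card_filter,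
    Fin.sum_univ_eq_sum_range (fun i => if i % 2 = 0 then 1 else 0) n,
    ← Finset.card_filter]
  exact range_filter_even_card n

lemma turan2_adj (n : ℕ) (x y : Fin n) :
    (SimpleGraph.turanGraph n 2).Adj x y ↔ (x : ℕ) % 2 ≠ (y : ℕ) % 2 := Iff.rfl

lemma turan_card (n : ℕ) : #(SimpleGraph.turanGraph n 2).edgeFinset = n ^ 2 / 4 := by
  have key := SimpleGraph.two_mul_card_edgeFinset (G := SimpleGraph.turanGraph n 2)
  set A : Finset (Fin n) := Finset.univ.filter (fun v => (v : ℕ) % 2 = 0) with hA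
  set B : Finset (Fin n) := Finset.univ.filter (fun v => ¬ (v : ℕ) % 2 = 0) with hB
  have hcardA : #A = (n + 1) / 2 := fin_filter_even_card n
  have hcardB : #B = n / 2 := by
    have := Finset.card_filter_add_card_filter_not
      (s := (Finset.univ : Finset (Fin n))) (p := fun v => (v : ℕ) % 2 = 0)
    rw [← hA, ← hB] at this
    simp only [Finset.card_univ, Fintype.card_fin] at this
    omega
  have hset : (Finset.univ.filter fun (p : Fin n × Fin n) =>
      (SimpleGraph.turanGraph n 2).Adj p.1 p.2) = (A ×ˢ B) ∪ (B ×ˢ A) := by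
    ext ⟨x, y⟩
    simp only [Finset.mem_filter, Finset.mem_univ, true_and, Finset.mem_union,
      Finset.mem_product, hA, hB, turan2_adj]
    omega
  have hdisj : Disjoint (A ×ˢ B) (B ×ˢ A) := by
    rw [Finset.disjoint_left]
    rintro ⟨x, y⟩ hx hy
    simp only [Finset.mem_product, hA, hB, Finset.mem_filter, Finset.mem_univ, true_and] at hx hy
    omega
  have : #(Finset.univ.filter fun (p : Fin n × Fin n) =>
      (SimpleGraph.turanGraph n 2).Adj p.1 p.2) = 2 * ((n + 1) / 2 * (n / 2)) := by
    rw [hset, Finset.card_union_of_disjoint hdisj, Finset.card_product, Finset.card_product,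
      hcardA, hcardB]
    ring
  have hEq : #(SimpleGraph.turanGraph n 2).edgeFinset = (n + 1) / 2 * (n / 2) := by
    have h2 : 2 * #(SimpleGraph.turanGraph n 2).edgeFinset = 2 * ((n + 1) / 2 * (n / 2)) := by
      rw [key]; exact this
    omega
  rw [hEq]
  rcases Nat.even_or_odd n with ⟨m, rfl⟩ | ⟨m, rfl⟩
  · have : m + m = 2 * m := by ring
    rw [this]
    have h1 : (2 * m + 1) / 2 = m := by omega
    have h2 : 2 * m / 2 = m := by omega
    rw [h1, h2]
    have : (2 * m) ^ 2 = m ^ 2 * 4 := by ring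
    rw [this, Nat.mul_div_cancel _ (by norm_num)]
    ring
  · have h1 : (2 * m + 1 + 1) / 2 = m + 1 := by omega
    have h2 : (2 * m + 1) / 2 = m := by omega
    rw [h1, h2]
    have : (2 * m + 1) ^ 2 = (m + 1) * m * 4 + 1 := by ring
    rw [this]
    omega

theorem mantel_extremal_bipartite (n : ℕ) (G : SimpleGraph (Fin n)) [DecidableRel G.Adj]
    (h : G.CliqueFree 3) (hcard : G.edgeFinset.card = n ^ 2 / 4) :
    ∃ A : Finset (Fin n), ∀ u v, G.Adj u v → (u ∈ A ↔ v ∉ A) := by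
  have htm : G.IsTuranMaximal 2 := by
    refine ⟨h, fun H _ cf => ?_⟩
    have hmax := (SimpleGraph.isTuranMaximal_turanGraph (n := n) (by norm_num : 0 < 2)).2 cf
    rw [turan_card] at hmax
    omega
  obtain ⟨f⟩ := htm.nonempty_iso_turanGraph
  rw [Fintype.card_fin] at f
  refine ⟨Finset.univ.filter (fun v => (f v : ℕ) % 2 = 0), fun u v huv => ?_⟩
  have := f.map_adj_iff.mpr huv
  rw [turan2_adj] at this
  simp only [Finset.mem_filter, Finset.mem_univ, true_and]
  omega
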